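/- Let n | q + 1, δ odd, b coprime to n, and α a primitive n-th root of unity in F_{q^2}. Let A = {α^t, α^{t+b}, ..., α^{t+(m-1)b}} ∪ {α^{t+i_1 b}, ..., α^{t+i_s b}} with m-1+δ ≤ i_1 < ... < i_s ≤ n - δ and i_{ℓ+1} - i_ℓ ≥ δ, and B = {α^{-(δ-3)b/2}, ..., α^{-b}, α^0, α^b, ..., α^{(δ-1)b/2}}. If the exponent set of AB is a union of q-cyclotomic cosets modulo n, then the cyclic code C_{AB} of length n over F_q with complete defining set AB is a cyclic (d_A⊥ - δ + 1, δ)-LRC with dimension k = n - m + 1 - (s+1)(δ-1); moreover if ⌈k/r⌉ = s + 1 with r = d_A⊥ - δ + 1, then C_{AB} is optimal with minimum distance m + δ - 1. -/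

import Mathlib

noncomputable section

open Polynomial
open scoped Pointwise

/-- The cyclic code of length `n` over `K` whose complete defining set is `Z ⊆ L`,
where `L` is an extension of `K` containing the `n`-th roots of unity:
codewords are those `c` whose associated polynomial vanishes on `Z`. -/
def cyclicCodeOn (K L : Type) [Field K] [Field L] [Algebra K L]
    (n : ℕ) (Z : Set L) : Submodule K (Fin n → K) where
  carrier := {c | ∀ β ∈ Z, ∑ i : Fin n, algebraMap K L (c i) * β ^ (i : ℕ) = 0}
  add_mem' := by
    intro a b ha hb β hβ
    simp only [Pi.add_apply, map_add, add_mul, Finset.sum_add_distrib]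
    rw [ha β hβ, hb β hβ, add_zero]
  zero_mem' := by intro β hβ; simp
  smul_mem' := by
    intro r a ha β hβ
    simp only [Pi.smul_apply, smul_eq_mul, map_mul, mul_assoc, ← Finset.mul_sum]
    rw [ha β hβ, mul_zero]

/-- Cyclic code of length `n` over `F` with complete defining set `Z ⊆ F`. -/
abbrev cyclicCode (F : Type) [Field F] (n : ℕ) (Z : Set F) : Submodule F (Fin n → F) :=
  cyclicCodeOn F F n Z

/-- The dual code of a code `C ⊆ F^n` (under the standard inner product). -/
def dualSet (F : Type) [Field F] (n : ℕ) (C : Set (Fin n → F)) : Set (Fin n → F) :=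
  {v | ∀ c ∈ C, ∑ i : Fin n, v i * c i = 0}

open Classical in
/-- Hamming weight of a vector. -/
def wt {F : Type} [Zero F] {n : ℕ} (c : Fin n → F) : ℕ :=
  (Finset.univ.filter (fun i => c i ≠ 0)).card

/-- `d` is the minimum Hamming distance (= minimum nonzero weight) of the code `C`. -/
def IsMinDist {F : Type} [Zero F] {n : ℕ} (C : Set (Fin n → F)) (d : ℕ) : Prop :=
  (∃ c ∈ C, c ≠ 0 ∧ wt c = d) ∧ ∀ c ∈ C, c ≠ 0 → d ≤ wt c

open Classical in
/-- `C` has `(r, δ)`-locality: every coordinate lies in a recovery set `S` of size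
at most `r + δ - 1` such that the punctured code `C|_S` has minimum distance `≥ δ`. -/
def HasLocality {F : Type} [Zero F] {n : ℕ} (C : Set (Fin n → F)) (r δ : ℕ) : Prop :=
  ∀ i : Fin n, ∃ S : Finset (Fin n), i ∈ S ∧ S.card ≤ r + δ - 1 ∧
    ∀ c ∈ C, ∀ c' ∈ C, (∃ j ∈ S, c j ≠ c' j) →
      δ ≤ (S.filter (fun j => c j ≠ c' j)).card

/-- The polynomial `c₀ + c₁ x + ⋯ + c_{n-1} x^{n-1}` associated to a vector. -/
def vecPoly {F : Type} [Semiring F] {n : ℕ} (c : Fin n → F) : Polynomial F :=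
  ∑ i : Fin n, Polynomial.C (c i) * Polynomial.X ^ (i : ℕ)

/-- The cyclic code of length `n` generated by `g(x)` (a divisor of `x^n - 1`). -/
def codeOfGen (F : Type) [Field F] (n : ℕ) (g : Polynomial F) : Set (Fin n → F) :=
  {c | g ∣ vecPoly c}

/-- Ceiling division `⌈a / b⌉` on naturals. -/
def ceilDiv' (a b : ℕ) : ℕ := (a + b - 1) / b

/-- The code parameters meet the Singleton-like bound for `(r, δ)`-LRCs:
`d = n - k - (⌈k/r⌉ - 1)(δ - 1) + 1`. -/
def SingletonOpt (n k r δ d : ℕ) : Prop :=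
  d = n - k - (ceilDiv' k r - 1) * (δ - 1) + 1

lemma vand_zero {L : Type} [Field L] {N : ℕ} (x : Fin N → L) (hx : Function.Injective x)
    (w : Fin N → L) (hw : ∀ e : ℕ, e < N → ∑ j, w j * x j ^ e = 0) : w = 0 := by
  classical
  set M : Matrix (Fin N) (Fin N) L := Matrix.transpose (Matrix.vandermonde x) with hM
  have hdet : IsUnit M.det := by
    rw [hM, Matrix.det_transpose, Matrix.det_vandermonde]
    refine (Finset.prod_ne_zero_iff.mpr ?_).isUnit
    intro i _
    exact Finset.prod_ne_zero_iff.mpr fun j hj =>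
      sub_ne_zero.mpr fun h => (Finset.mem_Ioi.mp hj).ne' (hx h)
  have hmv : M.mulVec w = 0 := by
    funext e
    have := hw (e : ℕ) e.isLt
    simpa [hM, Matrix.mulVec, dotProduct, Matrix.transpose, Matrix.vandermonde,
      mul_comm] using this
  have h2 : (M⁻¹ * M).mulVec w = 0 := by
    rw [← Matrix.mulVec_mulVec, hmv, Matrix.mulVec_zero]
  rwa [Matrix.nonsing_inv_mul M hdet, Matrix.one_mulVec] at h2

lemma vand_finset_zero {L : Type} [Field L] {n : ℕ} (T : Finset (Fin n)) (x w : Fin n → L)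
    (hx : Set.InjOn x T)
    (hw : ∀ e : ℕ, e < T.card → ∑ j ∈ T, w j * x j ^ e = 0) : ∀ j ∈ T, w j = 0 := by
  classical
  set emb := T.orderEmbOfFin rfl with hemb
  have hTmap : Finset.univ.map emb.toEmbedding = T := by
    ext j
    simp only [Finset.mem_map, Finset.mem_univ, true_and]
    constructor
    · rintro ⟨i, rfl⟩; exact T.orderEmbOfFin_mem rfl i
    · intro hj
      have : j ∈ Set.range emb := by rw [Finset.range_orderEmbOfFin]; exact hj
      obtain ⟨i, rfl⟩ := this
      exact ⟨i, rfl⟩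
  have hsum : ∀ (f : Fin n → L), ∑ j ∈ T, f j = ∑ i : Fin T.card, f (emb i) := by
    intro f
    conv_lhs => rw [← hTmap]
    rw [Finset.sum_map]; rfl
  have hxinj : Function.Injective (x ∘ emb) := by
    intro i j hij
    exact emb.injective (hx (T.orderEmbOfFin_mem rfl i) (T.orderEmbOfFin_mem rfl j) hij)
  have hz : (w ∘ emb) = 0 := by
    refine vand_zero (x ∘ emb) hxinj (w ∘ emb) fun e he => ?_
    have := hw e he
    rwa [hsum] at this
  intro j hj
  have : j ∈ Set.range emb := by rw [Finset.range_orderEmbOfFin]; exact hj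
  obtain ⟨i, rfl⟩ := this
  exact congrFun hz i

lemma fixed_field_range {K L : Type} [Field K] [Fintype K] [Field L] [Fintype L] [Algebra K L]
    (x : L) (hx : x ^ (Fintype.card K) = x) : ∃ y : K, algebraMap K L y = x := by
  classical
  set q := Fintype.card K with hq
  have hq2 : 2 ≤ q := Fintype.one_lt_card
  have hpne : (X ^ q - X : L[X]) ≠ 0 := by
    have hdeg : (X ^ q - X : L[X]).natDegree = q := by
      rw [natDegree_sub_eq_left_of_natDegree_lt] <;> simp [natDegree_X_pow] <;> omega
    intro h; rw [h] at hdeg; simp at hdeg; omega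
  set R := (X ^ q - X : L[X]).roots.toFinset with hR
  set S := (Finset.univ.image (algebraMap K L) : Finset L) with hS
  have hSR : S ⊆ R := by
    intro z hz
    simp only [hS, Finset.mem_image] at hz
    obtain ⟨y, -, rfl⟩ := hz
    rw [hR, Multiset.mem_toFinset, mem_roots hpne]
    simp only [IsRoot, eval_sub, eval_pow, eval_X, sub_eq_zero]
    rw [← map_pow, FiniteField.pow_card]
  have hcardS : S.card = q := by
    rw [hS, Finset.card_image_of_injective _ (algebraMap K L).injective, Finset.card_univ]
  have hcardR : R.card ≤ q := by
    have h1 : R.card ≤ Multiset.card (X ^ q - X : L[X]).roots :=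
      Multiset.toFinset_card_le _
    have h2 : Multiset.card (X ^ q - X : L[X]).roots ≤ (X ^ q - X : L[X]).natDegree :=
      Polynomial.card_roots' _
    have hdeg : (X ^ q - X : L[X]).natDegree = q := by
      rw [natDegree_sub_eq_left_of_natDegree_lt] <;> simp [natDegree_X_pow] <;> omega
    omega
  have hRS : R = S := (Finset.eq_of_subset_of_card_le hSR (by omega)).symm
  have hxR : x ∈ R := by
    rw [hR, Multiset.mem_toFinset, mem_roots hpne]
    simp only [IsRoot, eval_sub, eval_pow, eval_X, sub_eq_zero]
    exact hx
  rw [hRS, hS] at hxR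
  simp only [Finset.mem_image] at hxR
  obtain ⟨y, -, hy⟩ := hxR
  exact ⟨y, hy⟩

lemma exists_pow_card_hom (K L : Type) [Field K] [Fintype K] [Field L] [Fintype L] [Algebra K L] :
    ∃ ψ : L →+* L, ∀ x : L, ψ x = x ^ (Fintype.card K) := by
  classical
  set p := ringChar K with hp
  haveI hfact : Fact p.Prime := ⟨CharP.char_is_prime K p⟩
  haveI : CharP L p := charP_of_injective_algebraMap (algebraMap K L).injective p
  obtain ⟨f, -, hcard⟩ := FiniteField.card K p
  haveI : ExpChar L p := ExpChar.prime hfact.out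
  refine ⟨iterateFrobenius L p f, fun x => ?_⟩
  rw [iterateFrobenius_def, hcard]

lemma mem_cyclicCodeOn {K L : Type} [Field K] [Field L] [Algebra K L] {n : ℕ} {Z : Set L}
    {c : Fin n → K} :
    c ∈ cyclicCodeOn K L n Z ↔ ∀ β ∈ Z, ∑ i : Fin n, algebraMap K L (c i) * β ^ (i : ℕ) = 0 :=
  Iff.rfl

lemma vecPoly_coeff {F : Type} [Semiring F] {n : ℕ} (c : Fin n → F) (i : Fin n) :
    (vecPoly c).coeff (i : ℕ) = c i := by
  classical
  rw [vecPoly, Polynomial.finset_sum_coeff]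
  rw [Finset.sum_eq_single i]
  · simp
  · intro j _ hji
    have hne : ¬ ((i : ℕ) = (j : ℕ)) := fun h => hji (Fin.val_injective h.symm)
    simp [Polynomial.coeff_C_mul, Polynomial.coeff_X_pow, if_neg hne]
  · simp

lemma vecPoly_mem_degreeLT {F : Type} [Field F] {n : ℕ} (c : Fin n → F) :
    vecPoly c ∈ Polynomial.degreeLT F n := by
  refine Submodule.sum_mem _ fun i _ => ?_
  rw [Polynomial.mem_degreeLT]
  refine lt_of_le_of_lt (Polynomial.degree_C_mul_X_pow_le (i : ℕ) (c i)) ?_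
  exact_mod_cast i.isLt

lemma vecPoly_natDegree_lt {F : Type} [Field F] {n : ℕ} (hn : 0 < n) (c : Fin n → F) :
    (vecPoly c).natDegree < n := by
  have := vecPoly_mem_degreeLT c
  rw [Polynomial.mem_degreeLT] at this
  rcases eq_or_ne (vecPoly c) 0 with h | h
  · rw [h]; simpa using hn
  · exact (Polynomial.natDegree_lt_iff_degree_lt h).mpr this

lemma vecPoly_of_coeff {F : Type} [Field F] {n : ℕ} (Q : Polynomial F) (h : Q.natDegree < n) :
    vecPoly (fun i : Fin n => Q.coeff (i : ℕ)) = Q := by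
  classical
  rw [vecPoly]
  rw [Fin.sum_univ_eq_sum_range (fun i => Polynomial.C (Q.coeff i) * Polynomial.X ^ i)]
  conv_rhs => rw [Polynomial.as_sum_range' Q n h]
  exact Finset.sum_congr rfl fun i _ => (Polynomial.C_mul_X_pow_eq_monomial).trans rfl

lemma finrank_cyclicCodeOn (K L : Type) [Field K] [Fintype K] [Field L] [Fintype L] [Algebra K L]
    (n : ℕ) (hn : 0 < n) (D : Finset L)
    (hq : ∀ x ∈ D, x ^ (Fintype.card K) ∈ D)
    (hcard : D.card ≤ n) :
    Module.finrank K (cyclicCodeOn K L n (↑D : Set L)) = n - D.card := by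
  classical
  obtain ⟨ψ, hψ⟩ := exists_pow_card_hom K L
  set g : Polynomial L := ∏ β ∈ D, (Polynomial.X - Polynomial.C β) with hg
  have hgmonic : g.Monic := Polynomial.monic_prod_of_monic _ _ fun β _ => Polynomial.monic_X_sub_C β
  have hgdeg : g.natDegree = D.card := by
    rw [hg, Polynomial.natDegree_prod_of_monic _ _ fun β _ => Polynomial.monic_X_sub_C β]
    simp
  have hinj : Function.Injective (fun x : L => x ^ Fintype.card K) := by
    intro a b hab
    apply ψ.injective
    rw [hψ, hψ]; exact hab
  have himg : D.image (fun x => x ^ (Fintype.card K)) = D := by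
    apply Finset.eq_of_subset_of_card_le
    · intro z hz
      simp only [Finset.mem_image] at hz
      obtain ⟨x, hx, rfl⟩ := hz
      exact hq x hx
    · rw [Finset.card_image_of_injective _ hinj]
  have hmapg : g.map ψ = g := by
    rw [hg, Polynomial.map_prod]
    simp only [Polynomial.map_sub, Polynomial.map_X, Polynomial.map_C]
    calc ∏ β ∈ D, (Polynomial.X - Polynomial.C (ψ β))
        = ∏ β ∈ D.image (fun x => x ^ Fintype.card K), (Polynomial.X - Polynomial.C β) := by
          rw [Finset.prod_image (fun a _ b _ h => hinj h)]
          exact Finset.prod_congr rfl fun β _ => by rw [hψ]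
      _ = ∏ β ∈ D, (Polynomial.X - Polynomial.C β) := by rw [himg]
  have hcoeff : ∀ i, g.coeff i ∈ Set.range (algebraMap K L) := by
    intro i
    have h1 : (g.map ψ).coeff i = g.coeff i := by rw [hmapg]
    rw [Polynomial.coeff_map, hψ] at h1
    obtain ⟨y, hy⟩ := fixed_field_range (g.coeff i) h1
    exact ⟨y, hy⟩
  obtain ⟨g₀, hg₀map, hg₀deg, hg₀monic⟩ :=
    Polynomial.lifts_and_degree_eq_and_monic ((Polynomial.lifts_iff_coeff_lifts g).mpr hcoeff)
      hgmonic
  have hg₀natdeg : g₀.natDegree = D.card := by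
    rw [← hgdeg]; exact Polynomial.natDegree_eq_of_degree_eq hg₀deg
  have hg₀ne : g₀ ≠ 0 := hg₀monic.ne_zero
  -- membership characterization
  have hmem : ∀ c : Fin n → K, c ∈ cyclicCodeOn K L n (↑D : Set L) ↔ g₀ ∣ vecPoly c := by
    intro c
    set P : Polynomial L := (vecPoly c).map (algebraMap K L) with hP
    have hevalP : ∀ β : L, P.eval β = ∑ i : Fin n, algebraMap K L (c i) * β ^ (i : ℕ) := by
      intro β
      rw [hP, vecPoly, Polynomial.map_sum, Polynomial.eval_finset_sum]
      refine Finset.sum_congr rfl fun i _ => ?_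
      simp
    rw [mem_cyclicCodeOn]
    constructor
    · intro hc
      have hdvd : g ∣ P := by
        rw [hg]
        apply Finset.prod_dvd_of_coprime
        · intro a ha b hb hab
          exact (Polynomial.pairwise_coprime_X_sub_C (Function.injective_id (α := L))) hab
        · intro β hβ
          refine Polynomial.dvd_iff_isRoot.mpr ?_
          rw [Polynomial.IsRoot, hevalP]
          exact hc β (Finset.mem_coe.mpr hβ)
      have hmod : (vecPoly c %ₘ g₀).map (algebraMap K L) = 0 := by
        rw [Polynomial.map_modByMonic _ hg₀monic, hg₀map]
        exact (Polynomial.modByMonic_eq_zero_iff_dvd hgmonic).mpr hdvd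
      have hz : vecPoly c %ₘ g₀ = 0 := by
        rwa [Polynomial.map_eq_zero_iff (algebraMap K L).injective] at hmod
      exact (Polynomial.modByMonic_eq_zero_iff_dvd hg₀monic).mp hz
    · intro hdvd β hβ
      have hgP : g ∣ P := by
        rw [← hg₀map]
        exact Polynomial.map_dvd _ hdvd
      have hXg : (Polynomial.X - Polynomial.C β) ∣ g := by
        rw [hg]
        exact Finset.dvd_prod_of_mem (fun z => Polynomial.X - Polynomial.C z)
          (Finset.mem_coe.mp hβ)
      have hXβ : (Polynomial.X - Polynomial.C β) ∣ P := dvd_trans hXg hgP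
      have := Polynomial.dvd_iff_isRoot.mp hXβ
      rw [Polynomial.IsRoot, hevalP] at this
      exact this
  set kk := n - D.card with hkk
  have hkkn : D.card + kk = n := by omega
  -- the linear map
  have hmemΦ : ∀ h : Polynomial.degreeLT K kk,
      (fun i : Fin n => (g₀ * (h : Polynomial K)).coeff (i : ℕ)) ∈
        cyclicCodeOn K L n (↑D : Set L) := by
    intro h
    have hdeglt : (g₀ * (h : Polynomial K)).natDegree < n := by
      rcases eq_or_ne (h : Polynomial K) 0 with h0 | h0
      · rw [h0, mul_zero]; simpa using hn
      · rw [Polynomial.natDegree_mul hg₀ne h0, hg₀natdeg]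
        have := Polynomial.mem_degreeLT.mp h.2
        have := (Polynomial.natDegree_lt_iff_degree_lt h0).mpr this
        omega
    rw [hmem, vecPoly_of_coeff _ hdeglt]
    exact Dvd.intro _ rfl
  set Φ : Polynomial.degreeLT K kk →ₗ[K] (cyclicCodeOn K L n (↑D : Set L)) :=
    { toFun := fun h => ⟨fun i => (g₀ * (h : Polynomial K)).coeff (i : ℕ), hmemΦ h⟩
      map_add' := by
        intro a b
        apply Subtype.ext
        funext i
        simp [mul_add]
      map_smul' := by
        intro r a
        apply Subtype.ext
        funext i
        simp [Polynomial.coeff_smul, mul_smul_comm] } with hΦ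
  have hbij : Function.Bijective Φ := by
    constructor
    · intro a b hab
      apply Subtype.ext
      have h1 : ∀ i : Fin n, (g₀ * (a : Polynomial K)).coeff (i:ℕ) =
          (g₀ * (b : Polynomial K)).coeff (i:ℕ) := by
        intro i
        exact congrFun (congrArg Subtype.val hab) i
      have hdeg : ∀ h : Polynomial.degreeLT K kk, (g₀ * (h : Polynomial K)).natDegree < n := by
        intro h
        rcases eq_or_ne (h : Polynomial K) 0 with h0 | h0
        · rw [h0, mul_zero]; simpa using hn
        · rw [Polynomial.natDegree_mul hg₀ne h0, hg₀natdeg]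
          have := Polynomial.mem_degreeLT.mp h.2
          have := (Polynomial.natDegree_lt_iff_degree_lt h0).mpr this
          omega
      have : g₀ * (a : Polynomial K) = g₀ * (b : Polynomial K) := by
        rw [← vecPoly_of_coeff (g₀ * (a : Polynomial K)) (hdeg a),
          ← vecPoly_of_coeff (g₀ * (b : Polynomial K)) (hdeg b)]
        exact congrArg vecPoly (funext h1)
      exact mul_left_cancel₀ hg₀ne this
    · rintro ⟨c, hc⟩
      rw [hmem] at hc
      set h := vecPoly c /ₘ g₀ with hh
      have hfac : g₀ * h = vecPoly c := by
        have := Polynomial.modByMonic_add_div (vecPoly c) g₀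
        rw [(Polynomial.modByMonic_eq_zero_iff_dvd hg₀monic).mpr hc, zero_add] at this
        exact this
      have hhmem : h ∈ Polynomial.degreeLT K kk := by
        rw [Polynomial.mem_degreeLT]
        rcases eq_or_ne h 0 with h0 | h0
        · rw [h0, Polynomial.degree_zero]
          exact WithBot.bot_lt_coe _
        · have hvne : vecPoly c ≠ 0 := by
            rw [← hfac]
            exact mul_ne_zero hg₀ne h0
          have h2 : (vecPoly c).natDegree < n := vecPoly_natDegree_lt hn c
          rw [← hfac, Polynomial.natDegree_mul hg₀ne h0, hg₀natdeg] at h2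
          rw [← Polynomial.natDegree_lt_iff_degree_lt h0]
          omega
      refine ⟨⟨h, hhmem⟩, ?_⟩
      apply Subtype.ext
      funext i
      show (g₀ * h).coeff (i : ℕ) = c i
      rw [hfac, vecPoly_coeff]
  have hfr : Module.finrank K (Polynomial.degreeLT K kk) = kk := by
    rw [(Polynomial.degreeLTEquiv K kk).finrank_eq]
    simp
  rw [← hfr]
  exact (LinearEquiv.finrank_eq (LinearEquiv.ofBijective Φ hbij)).symm

lemma singleton_bound {K : Type} [Field K] {n : ℕ} (C : Submodule K (Fin n → K))
    (r δ k : ℕ) (hr : 0 < r) (hδ : 2 ≤ δ) (hk : 0 < k)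
    (hloc : HasLocality (C : Set (Fin n → K)) r δ)
    (hfin : Module.finrank K C = k) :
    ∃ c ∈ C, c ≠ 0 ∧ wt c ≤ n - k - (ceilDiv' k r - 1) * (δ - 1) + 1 := by
  classical
  set N : Finset (Fin n) → Submodule K (Fin n → K) :=
    fun E => C ⊓ (⨅ j ∈ E, LinearMap.ker (LinearMap.proj (R := K) (φ := fun _ : Fin n => K) j))
    with hN
  have hmemN : ∀ (E : Finset (Fin n)) (c : Fin n → K),
      c ∈ N E ↔ c ∈ C ∧ ∀ j ∈ E, c j = 0 := by
    intro E c
    simp [hN, Submodule.mem_inf, Submodule.mem_iInf, LinearMap.mem_ker, LinearMap.proj_apply]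
  set ν : Finset (Fin n) → ℕ := fun E => Module.finrank K (N E) with hν
  have hNle : ∀ {E E' : Finset (Fin n)}, E ⊆ E' → N E' ≤ N E := by
    intro E E' hEE' c hc
    rw [hmemN] at hc ⊢
    exact ⟨hc.1, fun j hj => hc.2 j (hEE' hj)⟩
  have hnuE : ν ∅ = k := by
    have hNeq : N ∅ = C := by
      ext c; rw [hmemN]; simp
    show Module.finrank K (N ∅) = k
    rw [hNeq, hfin]
  have hνk : ∀ E, ν E ≤ k := by
    intro E
    rw [← hnuE]
    exact Submodule.finrank_mono (hNle (Finset.empty_subset E))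
  have hinsert : ∀ (E : Finset (Fin n)) (x : Fin n), ν E ≤ ν (insert x E) + 1 := by
    intro E x
    set f : N E →ₗ[K] K :=
      (LinearMap.proj (R := K) (φ := fun _ : Fin n => K) x).comp (N E).subtype with hf
    have hrank := LinearMap.finrank_range_add_finrank_ker f
    have hmap : Submodule.map (N E).subtype (LinearMap.ker f) = N (insert x E) := by
      apply le_antisymm
      · rintro c ⟨⟨c', hc'⟩, hc0, rfl⟩
        have hx0 : c' x = 0 := hc0
        have hc'' := (hmemN E c').mp hc'
        refine (hmemN _ _).mpr ⟨hc''.1, fun j hj => ?_⟩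
        rcases Finset.mem_insert.mp hj with rfl | hj
        · exact hx0
        · exact hc''.2 j hj
      · intro c hc
        have hc' := (hmemN _ _).mp hc
        have hcE : c ∈ N E := (hmemN E c).mpr
          ⟨hc'.1, fun j hj => hc'.2 j (Finset.mem_insert_of_mem hj)⟩
        have hx0 : f ⟨c, hcE⟩ = 0 := hc'.2 x (Finset.mem_insert_self x E)
        exact Submodule.mem_map.mpr ⟨⟨c, hcE⟩, LinearMap.mem_ker.mpr hx0, rfl⟩
    have hker : Module.finrank K (LinearMap.ker f) = ν (insert x E) := by
      show _ = Module.finrank K (N (insert x E))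
      rw [← hmap]
      exact (LinearEquiv.finrank_eq
        (Submodule.equivMapOfInjective (N E).subtype (Submodule.injective_subtype _)
          (LinearMap.ker f)))
    have hrange : Module.finrank K (LinearMap.range f) ≤ 1 := by
      have := Submodule.finrank_le (LinearMap.range f)
      rwa [Module.finrank_self] at this
    have : ν E = Module.finrank K (LinearMap.range f) + ν (insert x E) := by
      rw [← hker, hrank]
    omega
  have hunion : ∀ (G E : Finset (Fin n)), ν E ≤ ν (E ∪ G) + G.card := by
    intro G
    induction G using Finset.induction with
    | empty => intro E; simp
    | insert _ _ hx ih =>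
      rename_i a G
      intro E
      have h1 := ih E
      have h2 := hinsert (E ∪ G) a
      have h3 : insert a (E ∪ G) = E ∪ insert a G := (Finset.union_insert a E G).symm
      rw [h3] at h2
      have h4 : (insert a G).card = G.card + 1 := Finset.card_insert_of_notMem hx
      omega
  have hrec : ∀ (E S D : Finset (Fin n)), D ⊆ S → D.card < δ →
      (∀ c ∈ (C : Set (Fin n → K)), ∀ c' ∈ (C : Set (Fin n → K)), (∃ j ∈ S, c j ≠ c' j) →
        δ ≤ (S.filter (fun j => c j ≠ c' j)).card) →
      N (E ∪ (S \ D)) = N (E ∪ S) := by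
    intro E S D hDS hDδ hSloc
    apply le_antisymm
    · intro c hc
      rw [hmemN] at hc ⊢
      refine ⟨hc.1, fun j hj => ?_⟩
      rcases Finset.mem_union.mp hj with hj | hj
      · exact hc.2 j (Finset.mem_union_left _ hj)
      · -- j ∈ S
        by_contra hcj
        have hdiff : ∃ j' ∈ S, c j' ≠ (0 : Fin n → K) j' := ⟨j, hj, by simpa using hcj⟩
        have hdle := hSloc c (SetLike.mem_coe.mpr hc.1) 0 (SetLike.mem_coe.mpr C.zero_mem) hdiff
        have hsub : S.filter (fun j' => c j' ≠ (0 : Fin n → K) j') ⊆ D := by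
          intro j' hj'
          obtain ⟨hj'S, hj'0⟩ := Finset.mem_filter.mp hj'
          by_contra hj'D
          have hj'mem : j' ∈ E ∪ S \ D :=
            Finset.mem_union_right _ (Finset.mem_sdiff.mpr ⟨hj'S, hj'D⟩)
          have hz := hc.2 j' hj'mem
          exact hj'0 (by simpa using hz)
        have := Finset.card_le_card hsub
        omega
    · exact hNle (Finset.union_subset_union (Finset.Subset.refl E) Finset.sdiff_subset)
  have hexists : ∀ E : Finset (Fin n), 0 < ν E → ∃ c, c ∈ N E ∧ c ≠ 0 := by
    intro E hE
    by_contra h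
    push_neg at h
    have hbot : N E = ⊥ := by
      rw [Submodule.eq_bot_iff]
      intro c hc
      by_contra hc0
      exact hc0 (h c hc)
    have hz : ν E = 0 := by
      show Module.finrank K (N E) = 0
      rw [hbot]
      exact finrank_bot K (Fin n → K)
    omega
  have hstrict : ∀ (E E' : Finset (Fin n)) (c : Fin n → K), E ⊆ E' → c ∈ N E → c ∉ N E' →
      ν E' < ν E := by
    intro E E' c hEE' hc hc'
    exact Submodule.finrank_lt_finrank_of_lt
      (lt_of_le_of_ne (hNle hEE') (fun h => hc' (h ▸ hc)))
  -- greedy induction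
  have main : ∀ j : ℕ, j * r + 1 ≤ k →
      ∃ E : Finset (Fin n), k ≤ ν E + j * r ∧ (k - ν E) + j * (δ - 1) ≤ E.card := by
    intro j
    induction j with
    | zero => intro _; exact ⟨∅, by simp [hnuE], by simp [hnuE]⟩
    | succ j ih =>
      intro hjk
      have hsm : (j + 1) * r = j * r + r := by ring
      have hjk' : j * r + 1 ≤ k := by omega
      obtain ⟨E, hE1, hE2⟩ := ih hjk'
      have hνE : 0 < ν E := by omega
      obtain ⟨c, hcN, hc0⟩ := hexists E hνE
      obtain ⟨x, hx⟩ := Function.ne_iff.mp hc0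
      obtain ⟨S, hxS, hScard, hSloc⟩ := hloc x
      set E' := E ∪ S with hE'
      set F := S \ E with hF
      have hcE' : c ∉ N E' := by
        intro hmem
        exact hx (((hmemN E' c).mp hmem).2 x (Finset.mem_union_right _ hxS))
      have hstr : ν E' < ν E := hstrict E E' c Finset.subset_union_left hcN hcE'
      have hFcard : δ - 1 ≤ F.card := by
        by_contra hlt
        push_neg at hlt
        have heq := hrec E S F Finset.sdiff_subset (by omega) hSloc
        have hset : E ∪ (S \ F) = E := by
          ext y
          simp only [Finset.mem_union, Finset.mem_sdiff, hF]
          tauto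
        rw [hset] at heq
        have : ν E = ν E' := by
          show Module.finrank K (N E) = Module.finrank K (N E')
          rw [heq]
        omega
      obtain ⟨D, hDF, hDcard⟩ := Finset.exists_subset_card_eq hFcard
      have heq2 := hrec E S D (hDF.trans Finset.sdiff_subset) (by omega) hSloc
      have hset2 : E ∪ (S \ D) = E ∪ (F \ D) := by
        ext y
        simp only [Finset.mem_union, Finset.mem_sdiff, hF]
        tauto
      have hchain : ν E ≤ ν E' + (F \ D).card := by
        have h1 := hunion (F \ D) E
        have h2 : ν (E ∪ (F \ D)) = ν E' := by
          show Module.finrank K (N (E ∪ (F \ D))) = Module.finrank K (N E')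
          rw [← hset2, heq2]
        omega
      have hFD : (F \ D).card = F.card - (δ - 1) := by
        rw [Finset.card_sdiff_of_subset hDF, hDcard]
      have hFr : F.card ≤ r + δ - 1 := le_trans (Finset.card_le_card Finset.sdiff_subset) hScard
      have hdisj : Disjoint E F := Finset.disjoint_sdiff
      have hE'card : E'.card = E.card + F.card := by
        have : E' = E ∪ F := by
          ext y
          simp only [Finset.mem_union, Finset.mem_sdiff, hE', hF]
          tauto
        rw [this, Finset.card_union_of_disjoint hdisj]
      have hsm2 : (j + 1) * (δ - 1) = j * (δ - 1) + (δ - 1) := by ring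
      refine ⟨E', by omega, by omega⟩
  -- padding
  have pad : ∀ (v : ℕ) (E : Finset (Fin n)), ν E = v → 1 ≤ ν E → ∀ X : ℕ,
      (k - ν E) + X ≤ E.card →
      ∃ E' : Finset (Fin n), 1 ≤ ν E' ∧ (k - 1) + X ≤ E'.card := by
    intro v
    induction v using Nat.strong_induction_on with
    | _ v ih =>
      intro E hEv h1 X hcard
      rcases eq_or_lt_of_le h1 with heq | hgt
      · refine ⟨E, h1, ?_⟩
        have := hνk E
        omega
      · obtain ⟨c, hcN, hc0⟩ := hexists E (by omega)
        obtain ⟨x, hx⟩ := Function.ne_iff.mp hc0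
        have hxE : x ∉ E := fun hxE => hx (((hmemN E c).mp hcN).2 x hxE)
        set E'' := insert x E with hE''
        have hcE'' : c ∉ N E'' := by
          intro hmem
          exact hx (((hmemN E'' c).mp hmem).2 x (Finset.mem_insert_self x E))
        have hlt : ν E'' < ν E := hstrict E E'' c (Finset.subset_insert x E) hcN hcE''
        have hge : ν E ≤ ν E'' + 1 := hinsert E x
        have hcard'' : E''.card = E.card + 1 := Finset.card_insert_of_notMem hxE
        exact ih (ν E'') (by omega) E'' rfl (by omega) X (by omega)
  set ℓ := ceilDiv' k r with hℓ
  have hℓ1 : (ℓ - 1) * r + 1 ≤ k := by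
    have h1 : ℓ - 1 = (k - 1) / r := by
      rw [hℓ]
      show (k + r - 1) / r - 1 = (k - 1) / r
      have h2 : k + r - 1 = (k - 1) + r := by omega
      rw [h2, Nat.add_div_right _ hr]
      exact Nat.add_sub_cancel _ 1
    rw [h1]
    have := Nat.div_mul_le_self (k - 1) r
    omega
  obtain ⟨E, hE1, hE2⟩ := main (ℓ - 1) hℓ1
  have hνE : 1 ≤ ν E := by omega
  obtain ⟨E', hE'1, hE'2⟩ := pad (ν E) E rfl hνE ((ℓ - 1) * (δ - 1)) hE2
  obtain ⟨c, hcN, hc0⟩ := hexists E' (by omega)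
  refine ⟨c, ((hmemN E' c).mp hcN).1, hc0, ?_⟩
  have hwt : wt c ≤ n - E'.card := by
    have hsub : Finset.univ.filter (fun i => c i ≠ 0) ⊆ Finset.univ \ E' := by
      intro j hj
      rw [Finset.mem_sdiff]
      refine ⟨Finset.mem_univ j, fun hjE' => ?_⟩
      exact (Finset.mem_filter.mp hj).2 (((hmemN E' c).mp hcN).2 j hjE')
    calc wt c ≤ (Finset.univ \ E').card := Finset.card_le_card hsub
      _ = n - E'.card := by
          rw [Finset.card_sdiff_of_subset (Finset.subset_univ E')]
          simp
  have hcardn : E'.card ≤ n := by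
    have := Finset.card_le_card (Finset.subset_univ E')
    simpa using this
  generalize hY : (ℓ - 1) * (δ - 1) = Y at *
  omega

/-- Theorem 5.9 of the paper: generic construction of optimal cyclic
`(r,δ)`-LRCs of length `n ∣ q + 1` with `δ` odd. -/
theorem stmt15 (K L : Type) [Field K] [Fintype K] [Field L] [Fintype L] [Algebra K L]
    (n m s b t δ : ℕ)
    (hn : 0 < n) (hm : 0 < m) (hs : 0 < s) (hδ : 2 ≤ δ) (hδodd : Odd δ)
    (hdvd : n ∣ Fintype.card K + 1) (hcop : Nat.Coprime n (Fintype.card K))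
    (hcard : Fintype.card L = Fintype.card K ^ 2)
    (hb : Nat.Coprime b n) (ht : t ≤ n - 1)
    (α : L) (hα : IsPrimitiveRoot α n)
    (idx : Fin s → ℕ)
    (hlow : ∀ l : Fin s, m - 1 + δ ≤ idx l) (hupp : ∀ l : Fin s, idx l ≤ n - δ)
    (hgap : ∀ l : Fin s, ∀ hl : (l : ℕ) + 1 < s, idx l + δ ≤ idx ⟨(l : ℕ) + 1, hl⟩)
    (A B : Set L)
    (hAdef : A = {x : L | ∃ j < m, x = α ^ (t + j * b)} ∪
      {x : L | ∃ l : Fin s, x = α ^ (t + idx l * b)})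
    (hBdef : B = {x : L | (∃ e ≤ (δ - 1) / 2, x = α ^ (e * b)) ∨
      (∃ e ≤ (δ - 3) / 2, x = (α ^ (e * b))⁻¹)})
    (hcyclo : ∀ x ∈ A * B, x ^ Fintype.card K ∈ A * B)
    (dA : ℕ)
    (hdA : IsMinDist (dualSet L n (cyclicCode L n A : Set (Fin n → L))) dA) :
    HasLocality (cyclicCodeOn K L n (A * B) : Set (Fin n → K)) (dA - δ + 1) δ ∧
    Module.finrank K (cyclicCodeOn K L n (A * B)) = n - m + 1 - (s + 1) * (δ - 1) ∧
    (ceilDiv' (n - m + 1 - (s + 1) * (δ - 1)) (dA - δ + 1) = s + 1 →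
      IsMinDist (cyclicCodeOn K L n (A * B) : Set (Fin n → K)) (m + δ - 1) ∧
      SingletonOpt n (n - m + 1 - (s + 1) * (δ - 1)) (dA - δ + 1) δ (m + δ - 1)) := by
  classical
  haveI : NeZero n := ⟨hn.ne'⟩
  obtain ⟨wodd, hwodd⟩ := hδodd
  have hwodd1 : 1 ≤ wodd := by omega
  set h2 : ℕ := (δ - 3) / 2 with hh2
  set H2 : ℕ := (δ - 1) / 2 with hH2
  have hh2w : h2 = wodd - 1 := by omega
  have hH2w : H2 = wodd := by omega
  have hδ3 : 3 ≤ δ := by omega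
  have hh2H2 : H2 = h2 + 1 := by omega
  have hδsum : h2 + H2 = δ - 2 := by omega
  have hαne : α ≠ 0 := hα.ne_zero hn.ne'
  have hαn1 : α ^ n = 1 := hα.pow_eq_one
  have hβmod : ∀ (β : L), β ^ n = 1 → ∀ a : ℕ, β ^ (a % n) = β ^ a := by
    intro β hβ a
    conv_rhs => rw [← Nat.div_add_mod a n]
    rw [pow_add, pow_mul, hβ, one_pow, one_mul]
  have hαmod : ∀ a : ℕ, α ^ (a % n) = α ^ a := hβmod α hαn1
  have hpowmod : ∀ x y : ℕ, x ≡ y [MOD n] → α ^ x = α ^ y := by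
    intro x y hxy
    have hxy' : x % n = y % n := hxy
    rw [← hαmod x, ← hαmod y, hxy']
  have hpowmod' : ∀ x y : ℕ, α ^ x = α ^ y → x ≡ y [MOD n] := by
    intro x y hxy
    show x % n = y % n
    apply hα.pow_inj (Nat.mod_lt _ hn) (Nat.mod_lt _ hn)
    rw [hαmod x, hαmod y]
    exact hxy
  have hpowinj : ∀ i j : Fin n, α ^ ((i : ℕ) * b) = α ^ ((j : ℕ) * b) → i = j := by
    intro i j hij
    have h1 := hpowmod' _ _ hij
    have h2 := Nat.ModEq.cancel_right_of_coprime (c := b) (hb.symm) h1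
    apply Fin.ext
    have : (i : ℕ) % n = (j : ℕ) % n := h2
    rwa [Nat.mod_eq_of_lt i.isLt, Nat.mod_eq_of_lt j.isLt] at this
  set ζ : L := α ^ b with hζ
  have hζne : ζ ≠ 0 := pow_ne_zero _ hαne
  have hζpow : ∀ e : ℕ, ζ ^ e = α ^ (e * b) := by
    intro e
    rw [hζ, ← pow_mul, mul_comm]
  have hpadd : ∀ x y : ℕ, α ^ (x * b) * α ^ (y * b) = α ^ ((x + y) * b) := by
    intro x y
    rw [← pow_add, ← add_mul]
  have hcross1 : ∀ x z w : ℕ, x + w = z → α ^ x = α ^ z * (α ^ w)⁻¹ := by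
    intro x z w hxw
    have hw : α ^ w ≠ 0 := pow_ne_zero _ hαne
    field_simp
    rw [← pow_add, hxw]
  have hwin : ∀ β ∈ A, ∀ e : ℕ, e ≤ δ - 2 → β * (ζ ^ e * (ζ ^ h2)⁻¹) ∈ A * B := by
    intro β hβ e he
    rcases le_or_gt h2 e with hcase | hcase
    · have hBmem : α ^ ((e - h2) * b) ∈ B := by
        rw [hBdef]
        exact Or.inl ⟨e - h2, by omega, rfl⟩
      have hident : ζ ^ e * (ζ ^ h2)⁻¹ = α ^ ((e - h2) * b) := by
        rw [hζpow, hζpow]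
        exact (hcross1 ((e - h2) * b) (e * b) (h2 * b)
          (by rw [← add_mul]; congr 1; omega)).symm
      rw [hident]
      exact Set.mul_mem_mul hβ hBmem
    · have hBmem : (α ^ ((h2 - e) * b))⁻¹ ∈ B := by
        rw [hBdef]
        exact Or.inr ⟨h2 - e, by omega, rfl⟩
      have hident : ζ ^ e * (ζ ^ h2)⁻¹ = (α ^ ((h2 - e) * b))⁻¹ := by
        rw [hζpow, hζpow]
        have hee : e + (h2 - e) = h2 := by omega
        have h1 : α ^ (h2 * b) = α ^ (e * b) * α ^ ((h2 - e) * b) := by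
          rw [hpadd, hee]
        rw [h1]
        have he' : α ^ (e * b) ≠ 0 := pow_ne_zero _ hαne
        have hhe : α ^ ((h2 - e) * b) ≠ 0 := pow_ne_zero _ hαne
        field_simp
      rw [hident]
      exact Set.mul_mem_mul hβ hBmem
  have hppow : ∀ (x : L) (a c : ℕ), (x ^ a) ^ c = (x ^ c) ^ a := by
    intro x a c
    rw [← pow_mul, mul_comm, pow_mul]
  -- membership of the code, unfolded
  have hβA : ∀ β ∈ A, β ^ n = 1 := by
    intro β hβ
    rw [hAdef] at hβ
    rcases hβ with ⟨j, hj, rfl⟩ | ⟨l, rfl⟩ <;>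
      rw [← pow_mul, mul_comm, pow_mul, hαn1, one_pow]
  have hβAne : ∀ β ∈ A, β ≠ 0 := by
    intro β hβ h0
    have := hβA β hβ
    rw [h0, zero_pow hn.ne'] at this
    exact zero_ne_one this
  obtain ⟨⟨u, humem, hune, huwt⟩, humin⟩ := hdA
  -- PART 1 : locality
  have part1 : HasLocality (cyclicCodeOn K L n (A * B) : Set (Fin n → K)) (dA - δ + 1) δ := by
    intro i
    obtain ⟨j₀, hj₀⟩ := Function.ne_iff.mp hune
    simp only [Pi.zero_apply] at hj₀
    set σ : Fin n := i - j₀ with hσ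
    set u' : Fin n → L := fun j => u (j - σ) with hu'
    have hβadd : ∀ (β : L), β ^ n = 1 → ∀ x y : Fin n,
        β ^ ((x + y : Fin n) : ℕ) = β ^ (x : ℕ) * β ^ (y : ℕ) := by
      intro β hβ x y
      rw [Fin.val_add, hβmod β hβ, pow_add]
    have hu'dual : u' ∈ dualSet L n (cyclicCode L n A : Set (Fin n → L)) := by
      intro c hc
      have hc' : (fun j => c (j + σ)) ∈ (cyclicCode L n A : Set (Fin n → L)) := by
        rw [SetLike.mem_coe, mem_cyclicCodeOn]
        intro β hβ
        have hβ1 := hβA β hβ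
        have hβ0 : β ^ (σ : ℕ) ≠ 0 := pow_ne_zero _ (hβAne β hβ)
        have hc0 : ∑ i' : Fin n, algebraMap L L (c i') * β ^ (i' : ℕ) = 0 :=
          (SetLike.mem_coe.mp hc : c ∈ cyclicCode L n A) β hβ
        have key : (∑ j : Fin n, algebraMap L L (c (j + σ)) * β ^ (j : ℕ)) * β ^ (σ : ℕ) = 0 := by
          calc (∑ j : Fin n, algebraMap L L (c (j + σ)) * β ^ (j : ℕ)) * β ^ (σ : ℕ)
              = ∑ j : Fin n, algebraMap L L (c ((Equiv.addRight σ) j)) *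
                  β ^ (((Equiv.addRight σ) j : Fin n) : ℕ) := by
                rw [Finset.sum_mul]
                refine Finset.sum_congr rfl fun j _ => ?_
                simp only [Equiv.coe_addRight]
                rw [mul_assoc, ← hβadd β hβ1]
            _ = ∑ j : Fin n, algebraMap L L (c j) * β ^ (j : ℕ) :=
                Equiv.sum_comp (Equiv.addRight σ) (fun j => algebraMap L L (c j) * β ^ (j : ℕ))
            _ = 0 := hc0
        apply mul_right_cancel₀ hβ0
        rw [zero_mul]
        exact key
      calc ∑ j : Fin n, u' j * c j
          = ∑ j : Fin n, u' ((Equiv.addRight σ) j) * c ((Equiv.addRight σ) j) :=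
            (Equiv.sum_comp (Equiv.addRight σ) (fun j => u' j * c j)).symm
        _ = ∑ j : Fin n, u j * c (j + σ) := by
            refine Finset.sum_congr rfl fun j _ => ?_
            simp only [Equiv.coe_addRight]
            show u (j + σ - σ) * c (j + σ) = u j * c (j + σ)
            rw [add_sub_cancel_right]
        _ = 0 := humem _ hc'
    set S : Finset (Fin n) := Finset.univ.filter (fun j => u' j ≠ 0) with hS
    have hu'i : u' i = u j₀ := by
      show u (i - σ) = u j₀
      rw [hσ, sub_sub_cancel]
    have hiS : i ∈ S := by
      rw [hS, Finset.mem_filter]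
      exact ⟨Finset.mem_univ i, by rw [hu'i]; exact hj₀⟩
    have hScard : S.card = dA := by
      rw [← huwt, wt]
      rw [hS]
      apply Finset.card_bij (fun j _ => j - σ)
      · intro j hj
        rw [Finset.mem_filter] at hj ⊢
        exact ⟨Finset.mem_univ _, hj.2⟩
      · intro j1 hj1 j2 hj2 h
        exact sub_left_injective h
      · intro j hj
        refine ⟨j + σ, ?_, by rw [add_sub_cancel_right]⟩
        rw [Finset.mem_filter] at hj ⊢
        refine ⟨Finset.mem_univ _, ?_⟩
        show u (j + σ - σ) ≠ 0
        rw [add_sub_cancel_right]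
        exact hj.2
    refine ⟨S, hiS, by rw [hScard]; omega, ?_⟩
    intro c hcmem c' hc'mem hdiff
    by_contra hlt
    push_neg at hlt
    set T := S.filter (fun j => c j ≠ c' j) with hT
    have hTne : T.Nonempty := by
      obtain ⟨j, hjS, hjne⟩ := hdiff
      exact ⟨j, Finset.mem_filter.mpr ⟨hjS, hjne⟩⟩
    have hTcard : T.card ≤ δ - 1 := by omega
    set d : Fin n → K := c - c' with hd
    have hdmem : d ∈ cyclicCodeOn K L n (A * B) :=
      Submodule.sub_mem _ (SetLike.mem_coe.mp hcmem) (SetLike.mem_coe.mp hc'mem)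
    have hpc : ∀ e : ℕ, e < T.card →
        ∑ j ∈ T, (u' j * (algebraMap K L (d j) * ((ζ ^ (j : ℕ)) ^ h2)⁻¹)) *
          (ζ ^ (j : ℕ)) ^ e = 0 := by
      intro e he
      have he' : e ≤ δ - 2 := by omega
      have hv : (fun j : Fin n =>
          algebraMap K L (d j) * ((ζ ^ (j : ℕ)) ^ e * ((ζ ^ (j : ℕ)) ^ h2)⁻¹)) ∈
          (cyclicCode L n A : Set (Fin n → L)) := by
        rw [SetLike.mem_coe, mem_cyclicCodeOn]
        intro β hβ
        have hmem2 := hdmem (β * (ζ ^ e * (ζ ^ h2)⁻¹)) (hwin β hβ e he')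
        rw [← hmem2]
        refine Finset.sum_congr rfl fun j _ => ?_
        rw [mul_pow, mul_pow, inv_pow, ← pow_mul ζ e, mul_comm e (j : ℕ), pow_mul,
          ← pow_mul ζ h2, mul_comm h2 (j : ℕ), pow_mul]
        simp only [Algebra.algebraMap_self, RingHom.id_apply]
        ring
      have hdual := hu'dual _ hv
      have hzero : ∀ j ∈ Finset.univ, j ∉ T →
          u' j * ((algebraMap K L) (d j) * ((ζ ^ (j : ℕ)) ^ e * ((ζ ^ (j : ℕ)) ^ h2)⁻¹)) = 0 := by
        intro j _ hjT
        by_cases hjS : u' j = 0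
        · rw [hjS, zero_mul]
        · have hjmem : j ∈ S := Finset.mem_filter.mpr ⟨Finset.mem_univ _, hjS⟩
          have hdj : d j = 0 := by
            by_contra hdj0
            apply hjT
            refine Finset.mem_filter.mpr ⟨hjmem, ?_⟩
            intro hcc
            apply hdj0
            rw [hd]
            simp [sub_eq_zero, hcc]
          rw [hdj]
          simp
      calc ∑ j ∈ T, (u' j * (algebraMap K L (d j) * ((ζ ^ (j : ℕ)) ^ h2)⁻¹)) * (ζ ^ (j : ℕ)) ^ e
          = ∑ j ∈ T, u' j * ((algebraMap K L) (d j) *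
              ((ζ ^ (j : ℕ)) ^ e * ((ζ ^ (j : ℕ)) ^ h2)⁻¹)) :=
            Finset.sum_congr rfl fun j _ => by ring
        _ = ∑ j : Fin n, u' j * ((algebraMap K L) (d j) *
              ((ζ ^ (j : ℕ)) ^ e * ((ζ ^ (j : ℕ)) ^ h2)⁻¹)) :=
            Finset.sum_subset (Finset.subset_univ T) hzero
        _ = 0 := hdual
    have hz := vand_finset_zero T (fun j => ζ ^ (j : ℕ))
      (fun j => u' j * (algebraMap K L (d j) * ((ζ ^ (j : ℕ)) ^ h2)⁻¹))
      (fun j1 hj1 j2 hj2 h => by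
        apply hpowinj
        have h' : ζ ^ (j1 : ℕ) = ζ ^ (j2 : ℕ) := h
        rwa [hζpow, hζpow] at h')
      hpc
    obtain ⟨j, hjT⟩ := hTne
    have hj0 := hz j hjT
    have hjS : j ∈ S := (Finset.mem_filter.mp hjT).1
    have hu'j : u' j ≠ 0 := (Finset.mem_filter.mp hjS).2
    have hdj : d j ≠ 0 := by
      have := (Finset.mem_filter.mp hjT).2
      rw [hd]
      simpa [sub_eq_zero] using this
    have hdj' : algebraMap K L (d j) ≠ 0 := by
      intro h0
      exact hdj ((map_eq_zero_iff _ (algebraMap K L).injective).mp h0)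
    have hinv : ((ζ ^ (j : ℕ)) ^ h2)⁻¹ ≠ 0 :=
      inv_ne_zero (pow_ne_zero _ (pow_ne_zero _ hζne))
    exact (mul_ne_zero hu'j (mul_ne_zero hdj' hinv)) hj0
    -- 4-argument cross lemma
  have hcross : ∀ x y z w : ℕ, x + w = z + y → α ^ x * (α ^ y)⁻¹ = α ^ z * (α ^ w)⁻¹ := by
    intro x y z w hxw
    have hy : α ^ y ≠ 0 := pow_ne_zero _ hαne
    have hw : α ^ w ≠ 0 := pow_ne_zero _ hαne
    field_simp
    rw [← pow_add, ← pow_add]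
    exact hpowmod _ _ (by rw [hxw, Nat.add_comm])
  -- chain of idx
  have hchain : ∀ (j k : ℕ) (hj : j < s) (hk : k < s), j < k →
      idx ⟨j, hj⟩ + δ ≤ idx ⟨k, hk⟩ := by
    intro j k
    induction k with
    | zero => intro hj hk hjk; omega
    | succ k ihk =>
      intro hj hk hjk
      have hks : k < s := by omega
      have hgap' : idx ⟨k, hks⟩ + δ ≤ idx ⟨k + 1, hk⟩ := hgap ⟨k, hks⟩ hk
      rcases Nat.lt_or_ge j k with hcase | hcase
      · have := ihk hj hks hcase
        omega
      · have hjk' : j = k := by omega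
        subst hjk'
        omega
  set U : Finset ℕ := Finset.range (m + δ - 2) ∪
    Finset.univ.biUnion (fun l : Fin s => Finset.Icc (idx l) (idx l + (δ - 2))) with hU
  have hlow0 := hlow ⟨0, hs⟩
  have hupp0 := hupp ⟨0, hs⟩
  have hUb : ∀ u ∈ U, u ≤ n - 2 := by
    intro u hu
    rw [hU, Finset.mem_union] at hu
    rcases hu with hu | hu
    · rw [Finset.mem_range] at hu
      omega
    · rw [Finset.mem_biUnion] at hu
      obtain ⟨l, -, hl⟩ := hu
      rw [Finset.mem_Icc] at hl
      have h1 := hupp l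
      have h2 := hlow l
      omega
  have hn2 : 2 ≤ n := by omega
  set φ : ℕ → L := fun u => α ^ (t + u * b) * (α ^ (h2 * b))⁻¹ with hφ
  have hφinj : Set.InjOn φ ↑U := by
    intro u1 hu1 u2 hu2 hEq
    have h3 : α ^ (t + u1 * b) = α ^ (t + u2 * b) :=
      mul_right_cancel₀ (inv_ne_zero (pow_ne_zero _ hαne)) hEq
    have h4 := hpowmod' _ _ h3
    have h5 : u1 * b ≡ u2 * b [MOD n] := Nat.ModEq.add_left_cancel' t h4
    have h6 := Nat.ModEq.cancel_right_of_coprime (hb.symm) h5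
    have hu1' := hUb u1 (Finset.mem_coe.mp hu1)
    have hu2' := hUb u2 (Finset.mem_coe.mp hu2)
    have h7 : u1 % n = u2 % n := h6
    rwa [Nat.mod_eq_of_lt (by omega), Nat.mod_eq_of_lt (by omega)] at h7
  set Dfin : Finset L := U.image φ with hDfin
  have hABD : A * B = ↑Dfin := by
    ext x
    constructor
    · intro hx
      rw [Set.mem_mul] at hx
      obtain ⟨a, ha, bb, hbb, rfl⟩ := hx
      rw [hBdef] at hbb
      rw [hAdef] at ha
      -- extract the exponent of a
      have ha' : ∃ j : ℕ, (j < m ∨ ∃ l : Fin s, j = idx l) ∧ a = α ^ (t + j * b) := by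
        rcases ha with ⟨j, hj, rfl⟩ | ⟨l, rfl⟩
        · exact ⟨j, Or.inl hj, rfl⟩
        · exact ⟨idx l, Or.inr ⟨l, rfl⟩, rfl⟩
      obtain ⟨j, hjc, rfl⟩ := ha'
      have hjU : ∀ dd : ℕ, dd ≤ δ - 2 → j + dd ∈ U := by
        intro dd hdd
        rw [hU, Finset.mem_union]
        rcases hjc with hj | ⟨l, rfl⟩
        · exact Or.inl (Finset.mem_range.mpr (by omega))
        · exact Or.inr (Finset.mem_biUnion.mpr ⟨l, Finset.mem_univ l,
            Finset.mem_Icc.mpr (by omega)⟩)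
      rcases hbb with ⟨e, he, rfl⟩ | ⟨e, he, rfl⟩
      · -- positive case : u = j + (e + h2)
        refine Finset.mem_coe.mpr (Finset.mem_image.mpr ⟨j + (e + h2), hjU (e + h2) (by omega), ?_⟩)
        rw [hφ]
        show α ^ (t + (j + (e + h2)) * b) * (α ^ (h2 * b))⁻¹ = α ^ (t + j * b) * α ^ (e * b)
        rw [← pow_add]
        exact (hcross1 (t + j * b + e * b) (t + (j + (e + h2)) * b) (h2 * b) (by ring)).symm
      · -- negative case : u = j + (h2 - e)
        refine Finset.mem_coe.mpr (Finset.mem_image.mpr ⟨j + (h2 - e), hjU (h2 - e) (by omega), ?_⟩)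
        rw [hφ]
        show α ^ (t + (j + (h2 - e)) * b) * (α ^ (h2 * b))⁻¹ = α ^ (t + j * b) * (α ^ (e * b))⁻¹
        apply hcross
        have h1 : (j + (h2 - e)) + e = j + h2 := by omega
        calc t + (j + (h2 - e)) * b + e * b = t + ((j + (h2 - e)) + e) * b := by ring
          _ = t + (j + h2) * b := by rw [h1]
          _ = (t + j * b) + h2 * b := by ring
    · intro hx
      rw [Finset.mem_coe, hDfin, Finset.mem_image] at hx
      obtain ⟨u, hu, rfl⟩ := hx
      rw [hU, Finset.mem_union] at hu
      rcases hu with hu | hu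
      · rw [Finset.mem_range] at hu
        rcases Nat.lt_or_ge u h2 with hcase | hcase
        · -- u < h2 : use j = 0 and inverse element with exponent h2 - u
          have hA0 : α ^ (t + 0 * b) ∈ A := by
            rw [hAdef]; exact Or.inl ⟨0, hm, rfl⟩
          have hB0 : (α ^ ((h2 - u) * b))⁻¹ ∈ B := by
            rw [hBdef]; exact Or.inr ⟨h2 - u, by omega, rfl⟩
          have hEq : φ u = α ^ (t + 0 * b) * (α ^ ((h2 - u) * b))⁻¹ := by
            rw [hφ]
            apply hcross
            have h1 : u + (h2 - u) = h2 := by omega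
            calc t + u * b + (h2 - u) * b = t + (u + (h2 - u)) * b := by ring
              _ = t + h2 * b := by rw [h1]
              _ = (t + 0 * b) + h2 * b := by ring
          rw [hEq]
          exact Set.mul_mem_mul hA0 hB0
        · -- h2 ≤ u
          set vv := u - h2 with hvv
          set j := min vv (m - 1) with hj
          set e := vv - j with he
          have hjm : j < m := by omega
          have heH : e ≤ H2 := by omega
          have hAj : α ^ (t + j * b) ∈ A := by
            rw [hAdef]; exact Or.inl ⟨j, hjm, rfl⟩
          have hBe : α ^ (e * b) ∈ B := by
            rw [hBdef]; exact Or.inl ⟨e, heH, rfl⟩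
          have hEq : φ u = α ^ (t + j * b) * α ^ (e * b) := by
            rw [hφ]
            show α ^ (t + u * b) * (α ^ (h2 * b))⁻¹ = α ^ (t + j * b) * α ^ (e * b)
            rw [← pow_add]
            symm
            apply hcross1
            have h1 : (j + e) + h2 = u := by omega
            calc (t + j * b + e * b) + h2 * b = t + ((j + e) + h2) * b := by ring
              _ = t + u * b := by rw [h1]
          rw [hEq]
          exact Set.mul_mem_mul hAj hBe
      · rw [Finset.mem_biUnion] at hu
        obtain ⟨l, -, hl⟩ := hu
        rw [Finset.mem_Icc] at hl
        have hAl : α ^ (t + idx l * b) ∈ A := by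
          rw [hAdef]; exact Or.inr ⟨l, rfl⟩
        rcases Nat.lt_or_ge u (idx l + h2) with hcase | hcase
        · -- u < idx l + h2 : inverse with exponent idx l + h2 - u
          have hBe : (α ^ ((idx l + h2 - u) * b))⁻¹ ∈ B := by
            rw [hBdef]; exact Or.inr ⟨idx l + h2 - u, by omega, rfl⟩
          have hEq : φ u = α ^ (t + idx l * b) * (α ^ ((idx l + h2 - u) * b))⁻¹ := by
            rw [hφ]
            apply hcross
            have h1 : u + (idx l + h2 - u) = idx l + h2 := by omega
            calc t + u * b + (idx l + h2 - u) * b = t + (u + (idx l + h2 - u)) * b := by ring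
              _ = t + (idx l + h2) * b := by rw [h1]
              _ = (t + idx l * b) + h2 * b := by ring
          rw [hEq]
          exact Set.mul_mem_mul hAl hBe
        · -- idx l + h2 ≤ u : positive with exponent u - idx l - h2
          have hBe : α ^ ((u - idx l - h2) * b) ∈ B := by
            rw [hBdef]; exact Or.inl ⟨u - idx l - h2, by omega, rfl⟩
          have hEq : φ u = α ^ (t + idx l * b) * α ^ ((u - idx l - h2) * b) := by
            rw [hφ]
            show α ^ (t + u * b) * (α ^ (h2 * b))⁻¹ =
              α ^ (t + idx l * b) * α ^ ((u - idx l - h2) * b)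
            rw [← pow_add]
            symm
            apply hcross1
            have h1 : (idx l + (u - idx l - h2)) + h2 = u := by omega
            calc (t + idx l * b + (u - idx l - h2) * b) + h2 * b
                = t + ((idx l + (u - idx l - h2)) + h2) * b := by ring
              _ = t + u * b := by rw [h1]
          rw [hEq]
          exact Set.mul_mem_mul hAl hBe
  -- cardinality of U
  have hdisj : Disjoint (Finset.range (m + δ - 2))
      (Finset.univ.biUnion (fun l : Fin s => Finset.Icc (idx l) (idx l + (δ - 2)))) := by
    rw [Finset.disjoint_left]
    intro x hx hx'
    rw [Finset.mem_range] at hx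
    rw [Finset.mem_biUnion] at hx'
    obtain ⟨l, -, hl⟩ := hx'
    rw [Finset.mem_Icc] at hl
    have := hlow l
    omega
  have hpair : ∀ l1 ∈ (Finset.univ : Finset (Fin s)), ∀ l2 ∈ Finset.univ, l1 ≠ l2 →
      Disjoint (Finset.Icc (idx l1) (idx l1 + (δ - 2)))
        (Finset.Icc (idx l2) (idx l2 + (δ - 2))) := by
    intro l1 _ l2 _ hne
    rw [Finset.disjoint_left]
    intro x hx hx'
    rw [Finset.mem_Icc] at hx hx'
    rcases Nat.lt_or_ge (l1 : ℕ) (l2 : ℕ) with hcase | hcase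
    · have := hchain (l1 : ℕ) (l2 : ℕ) l1.isLt l2.isLt hcase
      simp only [Fin.eta] at this
      omega
    · have hcase' : (l2 : ℕ) < (l1 : ℕ) := by
        rcases Nat.lt_or_ge (l2 : ℕ) (l1 : ℕ) with h | h
        · exact h
        · exact absurd (Fin.ext (by omega)) hne
      have := hchain (l2 : ℕ) (l1 : ℕ) l2.isLt l1.isLt hcase'
      simp only [Fin.eta] at this
      omega
  have hUcard : U.card = (m + δ - 2) + s * (δ - 1) := by
    rw [hU, Finset.card_union_of_disjoint hdisj, Finset.card_range,
      Finset.card_biUnion hpair]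
    have hic : ∀ l : Fin s, (Finset.Icc (idx l) (idx l + (δ - 2))).card = δ - 1 := by
      intro l
      rw [Nat.card_Icc]
      omega
    rw [Finset.sum_congr rfl fun l _ => hic l, Finset.sum_const, Finset.card_univ,
      Fintype.card_fin, smul_eq_mul]
  have hDcard : Dfin.card = (m + δ - 2) + s * (δ - 1) := by
    rw [hDfin, Finset.card_image_of_injOn hφinj, hUcard]
  have hDle : Dfin.card ≤ n - 1 := by
    have hsub : U ⊆ Finset.range (n - 1) := by
      intro u hu
      rw [Finset.mem_range]
      have := hUb u hu
      omega
    have h1 := Finset.card_le_card hsub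
    rw [Finset.card_range] at h1
    rw [hDfin, Finset.card_image_of_injOn hφinj]
    omega
  have part2 : Module.finrank K (cyclicCodeOn K L n (A * B)) =
      n - m + 1 - (s + 1) * (δ - 1) := by
    have hclosed : ∀ x ∈ Dfin, x ^ Fintype.card K ∈ Dfin := by
      intro x hx
      have h1 : x ∈ A * B := by rw [hABD]; exact Finset.mem_coe.mpr hx
      have h2 := hcyclo x h1
      rw [hABD] at h2
      exact Finset.mem_coe.mp h2
    have h1 : Module.finrank K (cyclicCodeOn K L n (A * B)) = n - Dfin.card := by
      rw [hABD]
      exact finrank_cyclicCodeOn K L n hn Dfin hclosed (by omega)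
    rw [h1, hDcard]
    have hsp : (s + 1) * (δ - 1) = s * (δ - 1) + (δ - 1) := by ring
    generalize hPP : s * (δ - 1) = P at hDcard hDle hsp ⊢
    omega
  refine ⟨part1, part2, ?_⟩
  -- PART 3
  intro hceil
  -- BCH-type lower bound on minimum distance
  have hBCH : ∀ c : Fin n → K, c ∈ cyclicCodeOn K L n (A * B) → c ≠ 0 → m + δ - 1 ≤ wt c := by
    intro c hc hcne
    by_contra hltwt
    push_neg at hltwt
    set T := Finset.univ.filter (fun i : Fin n => c i ≠ 0) with hT
    have hwtc : wt c = T.card := rfl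
    have hTcard : T.card ≤ m + δ - 2 := by omega
    have hTne : T.Nonempty := by
      obtain ⟨i0, hi0⟩ := Function.ne_iff.mp hcne
      simp only [Pi.zero_apply] at hi0
      exact ⟨i0, Finset.mem_filter.mpr ⟨Finset.mem_univ _, hi0⟩⟩
    have hwineq : ∀ v : ℕ, v ≤ m + δ - 3 → α ^ t * (ζ ^ v * (ζ ^ h2)⁻¹) ∈ A * B := by
      intro v hv
      rcases Nat.lt_or_ge v (δ - 1) with hcase | hcase
      · have hA0 : α ^ (t + 0 * b) ∈ A := by
          rw [hAdef]; exact Or.inl ⟨0, hm, rfl⟩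
        have := hwin _ hA0 v (by omega)
        have ht0 : α ^ (t + 0 * b) = α ^ t := by norm_num
        rwa [ht0] at this
      · have hvh2 : h2 ≤ v := by omega
        have hvm : v - h2 ≤ m - 1 + H2 := by omega
        set j := min (v - h2) (m - 1) with hj
        set e := (v - h2) - j with he
        have hjm : j < m := by omega
        have heH : e ≤ H2 := by omega
        have hAj : α ^ (t + j * b) ∈ A := by
          rw [hAdef]; exact Or.inl ⟨j, hjm, rfl⟩
        have hBe : α ^ (e * b) ∈ B := by
          rw [hBdef]; exact Or.inl ⟨e, heH, rfl⟩
        have hEq : α ^ t * (ζ ^ v * (ζ ^ h2)⁻¹) = α ^ (t + j * b) * α ^ (e * b) := by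
          rw [hζpow, hζpow, ← mul_assoc, ← pow_add, ← pow_add]
          symm
          apply hcross1
          have h1 : (j + e) + h2 = v := by omega
          calc (t + j * b + e * b) + h2 * b = t + ((j + e) + h2) * b := by ring
            _ = t + v * b := by rw [h1]
        rw [hEq]
        exact Set.mul_mem_mul hAj hBe
    have heqs : ∀ e : ℕ, e < T.card →
        ∑ j ∈ T, (algebraMap K L (c j) * ((α ^ t) ^ (j : ℕ) * ((ζ ^ (j : ℕ)) ^ h2)⁻¹)) *
          (ζ ^ (j : ℕ)) ^ e = 0 := by
      intro e he
      have he' : e ≤ m + δ - 3 := by omega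
      have hmem2 := hc (α ^ t * (ζ ^ e * (ζ ^ h2)⁻¹)) (hwineq e he')
      have hzero : ∀ j ∈ Finset.univ, j ∉ T →
          algebraMap K L (c j) * (α ^ t * (ζ ^ e * (ζ ^ h2)⁻¹)) ^ (j : ℕ) = 0 := by
        intro j _ hjT
        have hcj : c j = 0 := by
          by_contra hcj0
          exact hjT (Finset.mem_filter.mpr ⟨Finset.mem_univ _, hcj0⟩)
        rw [hcj]
        simp
      calc ∑ j ∈ T, (algebraMap K L (c j) * ((α ^ t) ^ (j : ℕ) * ((ζ ^ (j : ℕ)) ^ h2)⁻¹)) *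
            (ζ ^ (j : ℕ)) ^ e
          = ∑ j ∈ T, algebraMap K L (c j) * (α ^ t * (ζ ^ e * (ζ ^ h2)⁻¹)) ^ (j : ℕ) := by
            refine Finset.sum_congr rfl fun j _ => ?_
            rw [mul_pow, mul_pow, inv_pow, ← pow_mul ζ e, mul_comm e (j : ℕ), pow_mul,
              ← pow_mul ζ h2, mul_comm h2 (j : ℕ), pow_mul]
            ring
        _ = ∑ j : Fin n, algebraMap K L (c j) * (α ^ t * (ζ ^ e * (ζ ^ h2)⁻¹)) ^ (j : ℕ) :=
            Finset.sum_subset (Finset.subset_univ T) hzero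
        _ = 0 := hmem2
    have hz := vand_finset_zero T (fun j => ζ ^ (j : ℕ))
      (fun j => algebraMap K L (c j) * ((α ^ t) ^ (j : ℕ) * ((ζ ^ (j : ℕ)) ^ h2)⁻¹))
      (fun j1 hj1 j2 hj2 h => by
        apply hpowinj
        have h' : ζ ^ (j1 : ℕ) = ζ ^ (j2 : ℕ) := h
        rwa [hζpow, hζpow] at h')
      heqs
    obtain ⟨j, hjT⟩ := hTne
    have hj0 := hz j hjT
    have hcj : c j ≠ 0 := (Finset.mem_filter.mp hjT).2
    have hcj' : algebraMap K L (c j) ≠ 0 := by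
      intro h0
      exact hcj ((map_eq_zero_iff _ (algebraMap K L).injective).mp h0)
    have hne2 : (α ^ t) ^ (j : ℕ) * ((ζ ^ (j : ℕ)) ^ h2)⁻¹ ≠ 0 :=
      mul_ne_zero (pow_ne_zero _ (pow_ne_zero _ hαne))
        (inv_ne_zero (pow_ne_zero _ (pow_ne_zero _ hζne)))
    exact (mul_ne_zero hcj' hne2) hj0
  -- apply the Singleton bound
  have hk0 : 0 < n - m + 1 - (s + 1) * (δ - 1) := by
    have hsp : (s + 1) * (δ - 1) = s * (δ - 1) + (δ - 1) := by ring
    generalize hPP : s * (δ - 1) = P at hDcard hDle hsp ⊢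
    omega
  obtain ⟨c₀, hc₀mem, hc₀ne, hc₀wt⟩ := singleton_bound (cyclicCodeOn K L n (A * B))
    (dA - δ + 1) δ (n - m + 1 - (s + 1) * (δ - 1)) (by omega) hδ hk0 part1 part2
  rw [hceil] at hc₀wt
  have hval : n - (n - m + 1 - (s + 1) * (δ - 1)) - (s + 1 - 1) * (δ - 1) + 1 = m + δ - 1 := by
    have hsp : (s + 1) * (δ - 1) = s * (δ - 1) + (δ - 1) := by ring
    have hs1 : (s + 1 - 1) * (δ - 1) = s * (δ - 1) := by norm_num
    rw [hs1]
    generalize hPP : s * (δ - 1) = P at hDcard hDle hsp ⊢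
    omega
  rw [hval] at hc₀wt
  have hc₀wt' : wt c₀ = m + δ - 1 :=
    le_antisymm hc₀wt (hBCH c₀ hc₀mem hc₀ne)
  constructor
  · exact ⟨⟨c₀, SetLike.mem_coe.mpr hc₀mem, hc₀ne, hc₀wt'⟩,
      fun c hc hcne => hBCH c (SetLike.mem_coe.mp hc) hcne⟩
  · show m + δ - 1 = _
    rw [hceil]
    have hsp : (s + 1) * (δ - 1) = s * (δ - 1) + (δ - 1) := by ring
    have hs1 : (s + 1 - 1) * (δ - 1) = s * (δ - 1) := by norm_num
    rw [hs1]
    generalize hPP : s * (δ - 1) = P at hDcard hDle hsp ⊢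
    omega
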